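/- arXiv:1610.02738 — 5 statements merged into one kernel-verified Lean document; each statement's English description precedes it below -/
import Mathlib

section
/- Assume the binary response model Y = 1{W'θ* ≥ ξ} with Med(ξ | W = w) = 0 for all w in the support of W is correctly specified, and suppose the margin condition holds (with some exponent ϑ ≥ 1 and constant h > 0). Let θ₀ be a maximizer of S(θ) over {−1,1}×Θ_q, assumed to be attained in {−1,1}×Θ_q. Then b* ∈ B_q if and only if W'θ₀ and W'θ* have the same sign with probability 1. -/
open MeasureTheory ProbabilityTheory Real

noncomputable section

/-- The covariate vector `w = (x₀, x̃, z) ∈ ℝ × ℝ^k × ℝ^p`. -/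
abbrev Cov (k p : ℕ) : Type := ℝ × (Fin k → ℝ) × (Fin p → ℝ)

/-- The linear index `w'θ = α·x₀ + x̃'β + z'γ` for `θ = (α, β, γ)`. -/
def dotC {k p : ℕ} (θ : ℝ × (Fin k → ℝ) × (Fin p → ℝ)) (w : Cov k p) : ℝ :=
  θ.1 * w.1 + (∑ j, w.2.1 j * θ.2.1 j) + (∑ j, w.2.2 j * θ.2.2 j)

/-- The binary prediction rule `b_θ(w) = 1{w'θ ≥ 0}`. -/
def bpred {k p : ℕ} (θ : ℝ × (Fin k → ℝ) × (Fin p → ℝ)) (w : Cov k p) : ℝ :=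
  if 0 ≤ dotC θ w then 1 else 0

/-- `ℓ₀`-"norm": the number of nonzero components. -/
def l0 {p : ℕ} (γ : Fin p → ℝ) : ℕ := (Finset.univ.filter fun j => γ j ≠ 0).card

/-- The `ℓ₀`-constrained parameter space `{−1,1} × Θ_q`. -/
def paramSet {k p : ℕ} (Θ : Set ((Fin k → ℝ) × (Fin p → ℝ))) (q : ℕ) :
    Set (ℝ × (Fin k → ℝ) × (Fin p → ℝ)) :=
  {θ | (θ.1 = -1 ∨ θ.1 = 1) ∧ θ.2 ∈ Θ ∧ l0 θ.2.2 ≤ q}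

/-- Population score `S(θ) = P(Y = b_θ(W))`. -/
def score {Ω : Type*} [MeasurableSpace Ω] {k p : ℕ} (μ : Measure Ω)
    (Y : Ω → ℝ) (W : Ω → Cov k p) (θ : ℝ × (Fin k → ℝ) × (Fin p → ℝ)) : ℝ :=
  (μ {ω | Y ω = bpred θ (W ω)}).toReal

/-- `S_q* = sup_{θ ∈ {−1,1}×Θ_q} S(θ)`. -/
def Sqstar {Ω : Type*} [MeasurableSpace Ω] {k p : ℕ} (μ : Measure Ω)
    (Y : Ω → ℝ) (W : Ω → Cov k p) (Θ : Set ((Fin k → ℝ) × (Fin p → ℝ))) (q : ℕ) : ℝ :=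
  sSup (score μ Y W '' paramSet Θ q)

/-- Empirical score `S_n(θ) = n⁻¹ Σᵢ 1{Yᵢ = b_θ(Wᵢ)}`. -/
def empScore {Ω : Type*} {k p n : ℕ} (data : Fin n → Ω → ℝ × Cov k p)
    (θ : ℝ × (Fin k → ℝ) × (Fin p → ℝ)) (ω : Ω) : ℝ :=
  (n : ℝ)⁻¹ * ∑ i, if (data i ω).1 = bpred θ ((data i ω).2) then 1 else 0

/-- `S̃(b) = P(Y = b(W))` for a binary predictor `b`. -/
def Stilde {Ω : Type*} [MeasurableSpace Ω] {k p : ℕ} (μ : Measure Ω)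
    (Y : Ω → ℝ) (W : Ω → Cov k p) (b : Cov k p → ℝ) : ℝ :=
  (μ {ω | Y ω = b (W ω)}).toReal

/-- Bayes predictor `b*(w) = 1{η(w) ≥ 1/2}`. -/
def bstar {k p : ℕ} (η : Cov k p → ℝ) (w : Cov k p) : ℝ :=
  if (1 : ℝ) / 2 ≤ η w then 1 else 0

/-- `r_n = max(s·ln(p ∨ n), 1)`. -/
def rN (s p n : ℕ) : ℝ := max ((s : ℝ) * Real.log (max (p : ℝ) (n : ℝ))) 1

/-- Euclidean norm on the parameter space `ℝ × ℝ^k × ℝ^p`. -/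
def eunorm {k p : ℕ} (θ : ℝ × (Fin k → ℝ) × (Fin p → ℝ)) : ℝ :=
  Real.sqrt (θ.1 ^ 2 + (∑ j, (θ.2.1 j) ^ 2) + ∑ j, (θ.2.2 j) ^ 2)

end


section AuxLemmas

lemma measurable_dotC {k p : ℕ} (θ : ℝ × (Fin k → ℝ) × (Fin p → ℝ)) :
    Measurable (dotC θ : Cov k p → ℝ) := by
  unfold dotC; fun_prop

lemma measurable_bpred {k p : ℕ} (θ : ℝ × (Fin k → ℝ) × (Fin p → ℝ)) :
    Measurable (bpred θ : Cov k p → ℝ) :=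
  Measurable.ite (measurableSet_le measurable_const (measurable_dotC θ))
    measurable_const measurable_const

lemma measurable_bstar {k p : ℕ} {η : Cov k p → ℝ} (hη : Measurable η) :
    Measurable (bstar η) :=
  Measurable.ite (measurableSet_le measurable_const hη) measurable_const measurable_const

lemma bpred_range {k p : ℕ} (θ : ℝ × (Fin k → ℝ) × (Fin p → ℝ)) (w : Cov k p) :
    bpred θ w = 0 ∨ bpred θ w = 1 := by
  unfold bpred; split_ifs <;> simp

lemma bstar_range {k p : ℕ} (η : Cov k p → ℝ) (w : Cov k p) :
    bstar η w = 0 ∨ bstar η w = 1 := by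
  unfold bstar; split_ifs <;> simp

lemma bpred_eq_iff {k p : ℕ} (θ θ' : ℝ × (Fin k → ℝ) × (Fin p → ℝ)) (w : Cov k p)
    (hbb : bpred θ w = bpred θ' w) : (0 ≤ dotC θ w ↔ 0 ≤ dotC θ' w) := by
  unfold bpred at hbb
  by_cases c0 : 0 ≤ dotC θ w <;> by_cases c1 : 0 ≤ dotC θ' w
  · exact iff_of_true c0 c1
  · rw [if_pos c0, if_neg c1] at hbb; norm_num at hbb
  · rw [if_neg c0, if_pos c1] at hbb; norm_num at hbb
  · exact iff_of_false c0 c1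

end AuxLemmas

/-- Proposition 1 of Chen–Lee: in a correctly specified binary response model
`Y = 1{W'θ* ≥ ξ}` with `Med(ξ|W=w) = 0`, under the margin condition, the Bayes predictor `b*`
belongs to `B_q` if and only if `W'θ₀` and `W'θ*` have the same sign with probability one. -/
theorem statement3
    {Ω : Type*} [MeasurableSpace Ω] (μ : Measure Ω) [IsProbabilityMeasure μ]
    (k p q : ℕ) (Θ : Set ((Fin k → ℝ) × (Fin p → ℝ)))
    (Y : Ω → ℝ) (W : Ω → Cov k p) (ξ : Ω → ℝ)
    (θstar θ0 : ℝ × (Fin k → ℝ) × (Fin p → ℝ))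
    (η : Cov k p → ℝ) (ϑ h : ℝ)
    (hY : Measurable Y) (hW : Measurable W) (hξ : Measurable ξ)
    -- the binary response model: Y = 1{W'θ* ≥ ξ}, with θ* ∈ {−1,1} × ℝ^{k+p}
    (hα : θstar.1 = -1 ∨ θstar.1 = 1)
    (hmodel : ∀ ω, Y ω = if ξ ω ≤ dotC θstar (W ω) then 1 else 0)
    -- conditional median restriction: Med(ξ | W = w) = 0
    (κξ : ProbabilityTheory.Kernel (Cov k p) ℝ) (hmk : IsMarkovKernel κξ)
    (hdis : ∀ (A : Set (Cov k p)) (B : Set ℝ), MeasurableSet A → MeasurableSet B →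
      μ {ω | W ω ∈ A ∧ ξ ω ∈ B} = ∫⁻ w in A, κξ w B ∂(Measure.map W μ))
    (hmed : ∀ᵐ w ∂(Measure.map W μ),
      (1 : ℝ) / 2 ≤ (κξ w (Set.Iic 0)).toReal ∧ (1 : ℝ) / 2 ≤ (κξ w (Set.Ici 0)).toReal)
    -- η is a measurable version of w ↦ P(Y = 1 | W = w)
    (hη : Measurable η)
    (hver : ∀ A : Set (Cov k p), MeasurableSet A →
      (μ {ω | Y ω = 1 ∧ W ω ∈ A}).toReal = ∫ w in A, η w ∂(Measure.map W μ))
    -- the margin condition with exponent ϑ ≥ 1 and constant h > 0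
    (hϑ : 1 ≤ ϑ) (hh : 0 < h)
    (hmargin : ∀ b : Cov k p → ℝ, Measurable b → (∀ w, b w = 0 ∨ b w = 1) →
      h ^ ϑ * (∫ ω, |bstar η (W ω) - b (W ω)| ∂μ) ^ ϑ
        ≤ Stilde μ Y W (bstar η) - Stilde μ Y W b)
    -- θ₀ maximizes S(θ) over {−1,1}×Θ_q, the maximum being attained
    (hθ0 : θ0 ∈ paramSet Θ q)
    (hθ0max : ∀ θ ∈ paramSet Θ q, score μ Y W θ ≤ score μ Y W θ0) :
    -- conclusion: b* ∈ B_q ↔ W'θ₀ and W'θ* have the same sign with probability 1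
    (∃ θ ∈ paramSet Θ q, ∀ᵐ w ∂(Measure.map W μ), bstar η w = bpred θ w)
      ↔ μ {ω | 0 ≤ dotC θ0 (W ω) ↔ 0 ≤ dotC θstar (W ω)} = 1 := by
    classical
  haveI := hmk
  set ν := Measure.map W μ with hνdef
  haveI hνprob : IsProbabilityMeasure ν := Measure.isProbabilityMeasure_map hW.aemeasurable
  set g : Cov k p → ENNReal := fun w => κξ w (Set.Iic (dotC θstar w)) with hgdef
  have hgle : ∀ w, g w ≤ 1 := fun w => prob_le_one
  -- the event {Y = 1}
  have hYiff : ∀ ω, Y ω = 1 ↔ ξ ω ≤ dotC θstar (W ω) := by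
    intro ω; rw [hmodel ω]; split_ifs with hc <;> simp [hc]
  have hY1m : MeasurableSet {ω | Y ω = 1} := hY (measurableSet_singleton 1)
  have hYval : ∀ ω, Y ω = 1 ∨ Y ω = 0 := by
    intro ω; rw [hmodel ω]; split_ifs <;> simp
  -- joint law of (W, ξ)
  have hWξ : Measurable fun ω => (W ω, ξ ω) := hW.prodMk hξ
  have hjoint : Measure.map (fun ω => (W ω, ξ ω)) μ = ν.compProd κξ := by
    haveI : IsProbabilityMeasure (Measure.map (fun ω => (W ω, ξ ω)) μ) :=
      Measure.isProbabilityMeasure_map hWξ.aemeasurable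
    refine ext_of_generate_finite _ generateFrom_prod.symm isPiSystem_prod ?_ ?_
    · rintro s ⟨A, hA, B, hB, rfl⟩
      simp only [Set.mem_setOf_eq] at hA hB
      rw [Measure.map_apply hWξ (hA.prod hB), Measure.compProd_apply_prod hA hB]
      exact hdis A B hA hB
    · simp
  -- L2: P(Y = 1, W ∈ A) = ∫⁻_A g dν
  have hL2 : ∀ A : Set (Cov k p), MeasurableSet A →
      μ {ω | Y ω = 1 ∧ W ω ∈ A} = ∫⁻ w in A, g w ∂ν := by
    intro A hA
    have hsm : MeasurableSet {wt : Cov k p × ℝ | wt.1 ∈ A ∧ wt.2 ≤ dotC θstar wt.1} :=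
      (hA.preimage measurable_fst).inter
        (measurableSet_le measurable_snd ((measurable_dotC θstar).comp measurable_fst))
    have h1 : {ω | Y ω = 1 ∧ W ω ∈ A}
        = (fun ω => (W ω, ξ ω)) ⁻¹' {wt : Cov k p × ℝ | wt.1 ∈ A ∧ wt.2 ≤ dotC θstar wt.1} := by
      ext ω
      simp only [Set.mem_preimage, Set.mem_setOf_eq, hYiff ω]
      tauto
    rw [h1, ← Measure.map_apply hWξ hsm, hjoint, Measure.compProd_apply hsm,
      ← lintegral_indicator hA]
    congr 1
    ext w
    by_cases hw : w ∈ A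
    · rw [Set.indicator_of_mem hw]
      congr 1
      ext t
      simp [Set.mem_preimage, hw]
    · rw [Set.indicator_of_notMem hw]
      have : (Prod.mk w ⁻¹' {wt : Cov k p × ℝ | wt.1 ∈ A ∧ wt.2 ≤ dotC θstar wt.1}) = ∅ := by
        ext t; simp [hw]
      rw [this, measure_empty]
  -- median condition in ℝ≥0∞ form
  have hmed' : ∀ᵐ w ∂ν, ENNReal.ofReal (1/2) ≤ κξ w (Set.Iic 0) ∧
      κξ w (Set.Ici (0:ℝ))ᶜ ≤ ENNReal.ofReal (1/2) := by
    filter_upwards [hmed] with w hw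
    constructor
    · rw [ENNReal.ofReal_le_iff_le_toReal (measure_ne_top _ _)]
      exact hw.1
    · have h1 : ENNReal.ofReal (1/2) ≤ κξ w (Set.Ici 0) := by
        rw [ENNReal.ofReal_le_iff_le_toReal (measure_ne_top _ _)]
        exact hw.2
      rw [prob_compl_eq_one_sub measurableSet_Ici]
      rw [tsub_le_iff_right]
      calc (1 : ENNReal) = ENNReal.ofReal (1/2) + ENNReal.ofReal (1/2) := by
            rw [← ENNReal.ofReal_add (by norm_num) (by norm_num)]; norm_num
        _ ≤ ENNReal.ofReal (1/2) + κξ w (Set.Ici 0) := by gcongr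
  -- the "bad" set N is null
  have hNm : MeasurableSet {w : Cov k p | 0 ≤ dotC θstar w ∧ η w < 1/2} :=
    (measurableSet_le measurable_const (measurable_dotC θstar)).inter
      (measurableSet_lt hη measurable_const)
  have hN : ν {w : Cov k p | 0 ≤ dotC θstar w ∧ η w < 1/2} = 0 := by
    have hsub : {w : Cov k p | 0 ≤ dotC θstar w ∧ η w < 1/2} ⊆
        ⋃ m : ℕ, {w : Cov k p | 0 ≤ dotC θstar w ∧ -(m:ℝ) ≤ η w ∧ η w ≤ 1/2 - 1/(m+1)} := by
      rintro w ⟨hd, hlt⟩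
      obtain ⟨m1, hm1⟩ := exists_nat_gt (-(η w))
      obtain ⟨m2, hm2⟩ := exists_nat_one_div_lt (by linarith : (0:ℝ) < 1/2 - η w)
      refine Set.mem_iUnion.2 ⟨max m1 m2, hd, ?_, ?_⟩
      · have : (m1 : ℝ) ≤ (max m1 m2 : ℕ) := by exact_mod_cast Nat.cast_le.2 (le_max_left m1 m2)
        linarith
      · have h2 : (1:ℝ)/((max m1 m2 : ℕ) + 1) ≤ 1/(m2 + 1) := by
          apply one_div_le_one_div_of_le
          · positivity
          · have : (m2 : ℝ) ≤ (max m1 m2 : ℕ) := by exact_mod_cast Nat.cast_le.2 (le_max_right m1 m2)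
            linarith
        linarith
    refine measure_mono_null hsub (measure_iUnion_null fun m => ?_)
    set A := {w : Cov k p | 0 ≤ dotC θstar w ∧ -(m:ℝ) ≤ η w ∧ η w ≤ 1/2 - 1/(m+1)} with hAdef
    have hAm : MeasurableSet A :=
      (measurableSet_le measurable_const (measurable_dotC θstar)).inter
        ((measurableSet_le measurable_const hη).inter (measurableSet_le hη measurable_const))
    have hfin : (∫⁻ w in A, g w ∂ν) ≠ ⊤ := by
      refine ne_of_lt (lt_of_le_of_lt ?_ (measure_lt_top ν A))
      calc ∫⁻ w in A, g w ∂ν ≤ ∫⁻ _ in A, 1 ∂ν := lintegral_mono fun w => hgle w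
        _ = ν A := by simp
    have hlow : ENNReal.ofReal (1/2) * ν A ≤ ∫⁻ w in A, g w ∂ν := by
      have hae : ∀ᵐ w ∂ν.restrict A, ENNReal.ofReal (1/2) ≤ g w := by
        filter_upwards [ae_restrict_of_ae hmed', ae_restrict_mem hAm] with w hw hwA
        exact le_trans hw.1 (measure_mono (Set.Iic_subset_Iic.2 hwA.1))
      calc ENNReal.ofReal (1/2) * ν A = ∫⁻ _ in A, ENNReal.ofReal (1/2) ∂ν := by
            rw [setLIntegral_const]
        _ ≤ ∫⁻ w in A, g w ∂ν := lintegral_mono_ae hae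
    have hlowR : (1/2) * (ν A).toReal ≤ ∫ w in A, η w ∂ν := by
      rw [← hver A hAm, hL2 A hAm]
      calc (1/2) * (ν A).toReal = (ENNReal.ofReal (1/2) * ν A).toReal := by
            rw [ENNReal.toReal_mul, ENNReal.toReal_ofReal (by norm_num)]
        _ ≤ (∫⁻ w in A, g w ∂ν).toReal := ENNReal.toReal_mono hfin hlow
    have hup : ∫ w in A, η w ∂ν ≤ (1/2 - 1/(m+1)) * (ν A).toReal := by
      have hint : IntegrableOn η A ν := by
        refine Measure.integrableOn_of_bounded (measure_ne_top ν A)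
          hη.aestronglyMeasurable (M := max (m:ℝ) (1/2)) ?_
        filter_upwards [ae_restrict_mem hAm] with w hw
        rw [Real.norm_eq_abs, abs_le]
        constructor
        · have := hw.2.1; have hm : (m:ℝ) ≤ max (m:ℝ) (1/2) := le_max_left _ _; linarith
        · have := hw.2.2
          have h12 : (1:ℝ)/2 ≤ max (m:ℝ) (1/2) := le_max_right _ _
          have hpos : (0:ℝ) < 1/(m+1) := by positivity
          linarith
      calc ∫ w in A, η w ∂ν ≤ ∫ _ in A, (1/2 - 1/(m+1) : ℝ) ∂ν :=
            setIntegral_mono_on hint (integrableOn_const (measure_ne_top ν A))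
              hAm (fun w hw => hw.2.2)
        _ = (1/2 - 1/(m+1)) * (ν A).toReal := by rw [setIntegral_const, smul_eq_mul, measureReal_def]; ring
    have hT0 : (ν A).toReal = 0 := by
      have hTnn : 0 ≤ (ν A).toReal := ENNReal.toReal_nonneg
      have hpos : (0:ℝ) < 1/(m+1) := by positivity
      nlinarith
    exact (ENNReal.toReal_eq_zero_iff _).mp hT0 |>.resolve_right (measure_ne_top ν A)
  -- L4 : Stilde b* ≤ score θstar
  have hL4 : Stilde μ Y W (bstar η) ≤ score μ Y W θstar := by
    set D := {w : Cov k p | dotC θstar w < 0 ∧ 1/2 ≤ η w} with hDdef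
    have hDm : MeasurableSet D :=
      (measurableSet_lt (measurable_dotC θstar) measurable_const).inter
        (measurableSet_le measurable_const hη)
    set T := W ⁻¹' D with hTdef
    have hTm : MeasurableSet T := hW hDm
    set S := {ω | Y ω = bstar η (W ω)} with hSdef
    set S' := {ω | Y ω = bpred θstar (W ω)} with hS'def
    -- on T, bstar = 1 and bpred θstar = 0
    have hST : S ∩ T = {ω | Y ω = 1} ∩ T := by
      ext ω
      simp only [Set.mem_inter_iff, hSdef, Set.mem_setOf_eq, Set.mem_preimage, hTdef, hDdef,
        Set.mem_setOf_eq, and_congr_left_iff]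
      intro hω
      rw [bstar, if_pos hω.2]
    have hS'T : S' ∩ T = T \ {ω | Y ω = 1} := by
      ext ω
      simp only [Set.mem_inter_iff, hS'def, Set.mem_setOf_eq, Set.mem_preimage, hTdef, hDdef,
        Set.mem_setOf_eq, Set.mem_diff]
      constructor
      · rintro ⟨hY0, hω⟩
        refine ⟨hω, ?_⟩
        rw [bpred, if_neg (not_le.2 hω.1)] at hY0
        rw [hY0]; norm_num
      · rintro ⟨hω, hY1'⟩
        refine ⟨?_, hω⟩
        rw [bpred, if_neg (not_le.2 hω.1)]
        rcases hYval ω with h1 | h0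
        · exact absurd h1 hY1'
        · exact h0
    -- the measure of {Y=1} ∩ T is at most half of ν D
    have ha : μ ({ω | Y ω = 1} ∩ T) = ∫⁻ w in D, g w ∂ν := by
      rw [← hL2 D hDm]
      congr 1
    have hale : μ ({ω | Y ω = 1} ∩ T) ≤ ENNReal.ofReal (1/2) * ν D := by
      rw [ha]
      have hae : ∀ᵐ w ∂ν.restrict D, g w ≤ ENNReal.ofReal (1/2) := by
        filter_upwards [ae_restrict_of_ae hmed', ae_restrict_mem hDm] with w hw hwD
        refine le_trans (measure_mono ?_) hw.2
        intro t ht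
        simp only [Set.mem_Iic] at ht
        simp only [Set.mem_compl_iff, Set.mem_Ici, not_le]
        exact lt_of_le_of_lt ht hwD.1
      calc ∫⁻ w in D, g w ∂ν ≤ ∫⁻ _ in D, ENNReal.ofReal (1/2) ∂ν := lintegral_mono_ae hae
        _ = ENNReal.ofReal (1/2) * ν D := by rw [setLIntegral_const]
    have hμT : μ T = ν D := (Measure.map_apply hW hDm).symm
    have hsplitT : μ ({ω | Y ω = 1} ∩ T) + μ (T \ {ω | Y ω = 1}) = μ T := by
      rw [Set.inter_comm]
      exact measure_inter_add_diff T hY1m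
    have hab : μ ({ω | Y ω = 1} ∩ T) ≤ μ (T \ {ω | Y ω = 1}) := by
      have h2a : μ ({ω | Y ω = 1} ∩ T) + μ ({ω | Y ω = 1} ∩ T) ≤
          μ ({ω | Y ω = 1} ∩ T) + μ (T \ {ω | Y ω = 1}) := by
        rw [hsplitT, hμT]
        calc μ ({ω | Y ω = 1} ∩ T) + μ ({ω | Y ω = 1} ∩ T)
            ≤ ENNReal.ofReal (1/2) * ν D + ENNReal.ofReal (1/2) * ν D := add_le_add hale hale
          _ = (ENNReal.ofReal (1/2) + ENNReal.ofReal (1/2)) * ν D := by ring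
          _ = 1 * ν D := by
              rw [← ENNReal.ofReal_add (by norm_num) (by norm_num)]; norm_num
          _ = ν D := one_mul _
      exact (ENNReal.add_le_add_iff_left (measure_ne_top μ _)).mp h2a
    -- outside T, bstar = bpred θstar up to the null set N
    have hsub2 : S \ T ⊆ (S' \ T) ∪ W ⁻¹' {w : Cov k p | 0 ≤ dotC θstar w ∧ η w < 1/2} := by
      rintro ω ⟨hωS, hωT⟩
      by_cases hn : W ω ∈ {w : Cov k p | 0 ≤ dotC θstar w ∧ η w < 1/2}
      · exact Or.inr hn
      · left
        refine ⟨?_, hωT⟩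
        simp only [Set.mem_setOf_eq, not_and, not_lt] at hn
        have hbb : bstar η (W ω) = bpred θstar (W ω) := by
          by_cases hd : 0 ≤ dotC θstar (W ω)
          · rw [bstar, if_pos (hn hd), bpred, if_pos hd]
          · have hD' : W ω ∉ D := hωT
            simp only [hDdef, Set.mem_setOf_eq, not_and, not_le] at hD'
            rw [bstar, if_neg (not_le.2 (hD' (not_le.1 hd))), bpred, if_neg hd]
        simp only [hS'def, Set.mem_setOf_eq, ← hbb]
        exact hωS
    have hnull : μ (W ⁻¹' {w : Cov k p | 0 ≤ dotC θstar w ∧ η w < 1/2}) = 0 := by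
      rw [hνdef, Measure.map_apply hW hNm] at hN
      exact hN
    have hμS : μ S ≤ μ S' := by
      calc μ S = μ (S ∩ T) + μ (S \ T) := (measure_inter_add_diff S hTm).symm
        _ ≤ μ (T \ {ω | Y ω = 1}) + μ (S' \ T) := by
            refine add_le_add ?_ ?_
            · rw [hST]; exact hab
            · refine le_trans (measure_mono hsub2) ?_
              refine le_trans (measure_union_le _ _) ?_
              rw [hnull, add_zero]
        _ = μ (S' ∩ T) + μ (S' \ T) := by rw [hS'T]
        _ = μ S' := measure_inter_add_diff S' hTm
    exact ENNReal.toReal_mono (measure_ne_top μ S') hμS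
  -- margin consequence
  have hzero : ∀ θ' : ℝ × (Fin k → ℝ) × (Fin p → ℝ),
      Stilde μ Y W (bstar η) ≤ score μ Y W θ' →
      ∀ᵐ ω ∂μ, bstar η (W ω) = bpred θ' (W ω) := by
    intro θ' hle
    have hm := hmargin (bpred θ') (measurable_bpred θ') (bpred_range θ')
    have hscore : Stilde μ Y W (bpred θ') = score μ Y W θ' := rfl
    rw [hscore] at hm
    set I := ∫ ω, |bstar η (W ω) - bpred θ' (W ω)| ∂μ with hIdef
    have hI0 : 0 ≤ I := integral_nonneg fun ω => abs_nonneg _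
    have hfm : Measurable fun ω => |bstar η (W ω) - bpred θ' (W ω)| :=
      (((measurable_bstar hη).comp hW).sub ((measurable_bpred θ').comp hW)).abs
    have hint : Integrable (fun ω => |bstar η (W ω) - bpred θ' (W ω)|) μ := by
      refine Integrable.mono' (integrable_const (2:ℝ)) hfm.aestronglyMeasurable ?_
      filter_upwards with ω
      rw [Real.norm_eq_abs, abs_abs]
      rcases bstar_range η (W ω) with h1 | h1 <;> rcases bpred_range θ' (W ω) with h2 | h2 <;>
        rw [h1, h2] <;> norm_num
    have hIzero : I = 0 := by
      by_contra hne
      have hIpos : 0 < I := lt_of_le_of_ne hI0 (Ne.symm hne)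
      have hp : 0 < h ^ ϑ * I ^ ϑ :=
        mul_pos (Real.rpow_pos_of_pos hh ϑ) (Real.rpow_pos_of_pos hIpos ϑ)
      linarith
    have hae0 := (integral_eq_zero_iff_of_nonneg (fun ω => abs_nonneg _) hint).mp hIzero
    filter_upwards [hae0] with ω hω
    have : |bstar η (W ω) - bpred θ' (W ω)| = 0 := hω
    have := abs_eq_zero.mp this
    linarith
  have hstarset : MeasurableSet {w : Cov k p | bstar η w = bpred θstar w} :=
    measurableSet_eq_fun (measurable_bstar hη) (measurable_bpred θstar)
  have hstar_ae : ∀ᵐ w ∂ν, bstar η w = bpred θstar w :=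
    (ae_map_iff hW.aemeasurable hstarset).mpr (hzero θstar hL4)
  -- measurability of the sign-agreement set
  have hSm : MeasurableSet {w : Cov k p | 0 ≤ dotC θ0 w ↔ 0 ≤ dotC θstar w} := by
    have : {w : Cov k p | 0 ≤ dotC θ0 w ↔ 0 ≤ dotC θstar w} =
        ({w | 0 ≤ dotC θ0 w} ∩ {w | 0 ≤ dotC θstar w}) ∪
        ({w | 0 ≤ dotC θ0 w}ᶜ ∩ {w | 0 ≤ dotC θstar w}ᶜ) := by
      ext w; by_cases h0 : 0 ≤ dotC θ0 w <;> by_cases h1 : 0 ≤ dotC θstar w <;>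
        simp [h0, h1]
    rw [this]
    exact ((measurableSet_le measurable_const (measurable_dotC θ0)).inter
        (measurableSet_le measurable_const (measurable_dotC θstar))).union
      ((measurableSet_le measurable_const (measurable_dotC θ0)).compl.inter
        (measurableSet_le measurable_const (measurable_dotC θstar)).compl)
  constructor
  · rintro ⟨θ, hθmem, hae⟩
    have hpull : ∀ᵐ ω ∂μ, bstar η (W ω) = bpred θ (W ω) :=
      (ae_map_iff hW.aemeasurable
        (measurableSet_eq_fun (measurable_bstar hη) (measurable_bpred θ))).mp hae
    have hEq : μ {ω | Y ω = bstar η (W ω)} = μ {ω | Y ω = bpred θ (W ω)} := by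
      apply measure_congr
      filter_upwards [hpull] with ω hω
      show (Y ω = bstar η (W ω)) = (Y ω = bpred θ (W ω))
      rw [hω]
    have hle : Stilde μ Y W (bstar η) ≤ score μ Y W θ0 := by
      have h1 : Stilde μ Y W (bstar η) = score μ Y W θ := by
        unfold Stilde score; rw [hEq]
      rw [h1]; exact hθ0max θ hθmem
    have hae0 : ∀ᵐ ω ∂μ, bstar η (W ω) = bpred θ0 (W ω) := hzero θ0 hle
    have hae1 : ∀ᵐ ω ∂μ, bstar η (W ω) = bpred θstar (W ω) :=
      (ae_map_iff hW.aemeasurable hstarset).mp hstar_ae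
    have hiff : ∀ᵐ ω ∂μ, (0 ≤ dotC θ0 (W ω) ↔ 0 ≤ dotC θstar (W ω)) := by
      filter_upwards [hae0, hae1] with ω h0 h1
      exact bpred_eq_iff θ0 θstar (W ω) (by rw [← h0, h1])
    show μ (W ⁻¹' {w : Cov k p | 0 ≤ dotC θ0 w ↔ 0 ≤ dotC θstar w}) = 1
    rw [← prob_compl_eq_zero_iff (hW hSm)]
    rw [ae_iff] at hiff
    convert hiff using 2
    rfl
  · intro hsign
    refine ⟨θ0, hθ0, ?_⟩
    have hνS : ν {w : Cov k p | 0 ≤ dotC θ0 w ↔ 0 ≤ dotC θstar w} = 1 := by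
      rw [hνdef, Measure.map_apply hW hSm]
      exact hsign
    have hSae : ∀ᵐ w ∂ν, (0 ≤ dotC θ0 w ↔ 0 ≤ dotC θstar w) := by
      rw [ae_iff, ← Set.compl_setOf]
      exact (prob_compl_eq_zero_iff hSm).mpr hνS
    filter_upwards [hstar_ae, hSae] with w h1 h2
    rw [h1]
    unfold bpred
    by_cases c : 0 ≤ dotC θstar w
    · rw [if_pos c, if_pos (h2.mpr c)]
    · rw [if_neg c, if_neg (fun hc => c (h2.mp hc))]
end

section
/- Assume the binary response model Y = 1{W'θ* ≥ ξ} with Med(ξ | W = w) = 0 for all w in the support of W is correctly specified. Suppose there are universal constants κ₁ > 0 and κ₂ > 0 such that (i) P(|W'θ*| ≥ κ₁) = 1, and (ii) there is an open interval T containing (−κ₁, κ₁) such that the conditional CDF t ↦ P(ξ ≤ t | W = w) has a derivative (with respect to t) bounded below by κ₂ for every t ∈ T and every w in the support of W. Then |2η(w) − 1| ≥ 2κ₁κ₂ for all w in the support of W, where η(w) = P(Y = 1 | W = w). -/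
open MeasureTheory ProbabilityTheory Real

/-- Proposition 2 of Chen–Lee: in a correctly specified binary response model
`Y = 1{W'θ* ≥ ξ}` with conditional median zero, if (i) `|W'θ*| ≥ κ₁` with probability one and
(ii) the conditional CDF `t ↦ P(ξ ≤ t | W = w)` has a derivative bounded below by `κ₂` on an
open interval `T ⊇ (−κ₁, κ₁)`, then `|2η(w) − 1| ≥ 2κ₁κ₂` on the support of `W`. -/
theorem statement4
    {Ω : Type*} [MeasurableSpace Ω] (μ : Measure Ω) [IsProbabilityMeasure μ]
    (m : ℕ) (Y : Ω → ℝ) (W : Ω → Fin m → ℝ) (ξ : Ω → ℝ)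
    (θstar : Fin m → ℝ) (η : (Fin m → ℝ) → ℝ) (κ₁ κ₂ : ℝ)
    (hY : Measurable Y) (hW : Measurable W) (hξ : Measurable ξ) (hη : Measurable η)
    -- the binary response model: Y = 1{W'θ* ≥ ξ}
    (hmodel : ∀ ω, Y ω = if ξ ω ≤ ∑ j, W ω j * θstar j then 1 else 0)
    -- conditional distribution of ξ given W, with median zero: Med(ξ | W = w) = 0
    (κξ : ProbabilityTheory.Kernel (Fin m → ℝ) ℝ) (hmk : IsMarkovKernel κξ)
    (hdis : ∀ (A : Set (Fin m → ℝ)) (B : Set ℝ), MeasurableSet A → MeasurableSet B →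
      μ {ω | W ω ∈ A ∧ ξ ω ∈ B} = ∫⁻ w in A, κξ w B ∂(Measure.map W μ))
    (hmed : ∀ᵐ w ∂(Measure.map W μ),
      (1 : ℝ) / 2 ≤ (κξ w (Set.Iic 0)).toReal ∧ (1 : ℝ) / 2 ≤ (κξ w (Set.Ici 0)).toReal)
    -- η is a measurable version of w ↦ P(Y = 1 | W = w)
    (hver : ∀ A : Set (Fin m → ℝ), MeasurableSet A →
      (μ {ω | Y ω = 1 ∧ W ω ∈ A}).toReal = ∫ w in A, η w ∂(Measure.map W μ))
    (hκ₁ : 0 < κ₁) (hκ₂ : 0 < κ₂)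
    -- (i) P(|W'θ*| ≥ κ₁) = 1
    (hi : μ {ω | κ₁ ≤ |∑ j, W ω j * θstar j|} = 1)
    -- (ii) the conditional CDF has derivative ≥ κ₂ on an open interval T ⊇ (−κ₁, κ₁)
    (hii : ∃ T : Set ℝ, IsOpen T ∧ Set.Ioo (-κ₁) κ₁ ⊆ T ∧
      ∃ d : (Fin m → ℝ) → ℝ → ℝ, ∀ᵐ w ∂(Measure.map W μ), ∀ t ∈ T,
        HasDerivAt (fun u : ℝ => (κξ w (Set.Iic u)).toReal) (d w t) t ∧ κ₂ ≤ d w t) :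
    -- conclusion: |2η(w) − 1| ≥ 2κ₁κ₂ for (almost) all w in the support of W
    ∀ᵐ w ∂(Measure.map W μ), 2 * κ₁ * κ₂ ≤ |2 * η w - 1| := by
  classical
  haveI := hmk
  set ν := Measure.map W μ with hνdef
  haveI hνp : IsProbabilityMeasure ν := Measure.isProbabilityMeasure_map hW.aemeasurable
  -- measurability of the single-index function
  have hdot : Measurable (fun w : Fin m → ℝ => ∑ j, w j * θstar j) := by
    exact Finset.measurable_sum _ fun j _ => (measurable_pi_apply j).mul_const _
  set S : Set ((Fin m → ℝ) × ℝ) := {p | p.2 ≤ ∑ j, p.1 j * θstar j} with hSdef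
  have hS : MeasurableSet S :=
    measurableSet_le measurable_snd (hdot.comp measurable_fst)
  have hWξ : Measurable fun ω => (W ω, ξ ω) := hW.prodMk hξ
  -- the joint law is the comp-prod of ν and the kernel
  have hρ : Measure.map (fun ω => (W ω, ξ ω)) μ = ν.compProd κξ := by
    haveI : IsProbabilityMeasure (Measure.map (fun ω => (W ω, ξ ω)) μ) :=
      Measure.isProbabilityMeasure_map hWξ.aemeasurable
    refine ext_of_generate_finite _ generateFrom_prod.symm isPiSystem_prod ?_ ?_
    · rintro s ⟨A, hA, B, hB, rfl⟩
      simp only [Set.mem_setOf_eq] at hA hB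
      rw [Measure.map_apply hWξ (hA.prod hB),
        Measure.compProd_apply_prod hA hB, ← hdis A B hA hB]
      rfl
    · simp [measure_univ]
  -- Y = 1 iff ξ ≤ W'θ*
  have hY1 : ∀ ω, Y ω = 1 ↔ ξ ω ≤ ∑ j, W ω j * θstar j := by
    intro ω; rw [hmodel ω]; split_ifs with h <;> simp [h]
  -- measurability of w ↦ κξ w (Iic (w·θ))
  have hsec : ∀ w : Fin m → ℝ, Prod.mk w ⁻¹' S = Set.Iic (∑ j, w j * θstar j) := by
    intro w; ext t; simp [hSdef, Set.mem_Iic]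
  have hmeasg' : Measurable fun w => κξ w (Set.Iic (∑ j, w j * θstar j)) := by
    have := Kernel.measurable_kernel_prodMk_left (κ := κξ) hS
    simpa [hsec] using this
  set g : (Fin m → ℝ) → ℝ := fun w => (κξ w (Set.Iic (∑ j, w j * θstar j))).toReal with hgdef
  have hbound : ∀ w, κξ w (Set.Iic (∑ j, w j * θstar j)) ≤ 1 := fun w => prob_le_one
  -- key formula
  have hkey : ∀ A : Set (Fin m → ℝ), MeasurableSet A →
      μ {ω | Y ω = 1 ∧ W ω ∈ A} =
        ∫⁻ w in A, κξ w (Set.Iic (∑ j, w j * θstar j)) ∂ν := by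
    intro A hA
    have hset : {ω | Y ω = 1 ∧ W ω ∈ A} =
        (fun ω => (W ω, ξ ω)) ⁻¹' ((A ×ˢ Set.univ) ∩ S) := by
      ext ω
      simp only [Set.mem_setOf_eq, Set.mem_preimage, Set.mem_inter_iff, Set.mem_prod,
        Set.mem_univ, and_true, hY1 ω, hSdef]
      tauto
    rw [hset, ← Measure.map_apply hWξ ((hA.prod MeasurableSet.univ).inter hS), hρ,
      Measure.compProd_apply ((hA.prod MeasurableSet.univ).inter hS)]
    have : ∀ w, κξ w (Prod.mk w ⁻¹' ((A ×ˢ Set.univ) ∩ S)) =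
        A.indicator (fun w => κξ w (Set.Iic (∑ j, w j * θstar j))) w := by
      intro w
      by_cases hw : w ∈ A
      · rw [Set.indicator_of_mem hw]
        congr 1
        ext t
        simp [hSdef, hw, Set.mem_Iic]
      · rw [Set.indicator_of_notMem hw]
        have : Prod.mk w ⁻¹' ((A ×ˢ Set.univ) ∩ S) = ∅ := by
          ext t; simp [hw]
        simp [this]
    simp_rw [this]
    rw [lintegral_indicator hA]
  have hkeyR : ∀ A : Set (Fin m → ℝ), MeasurableSet A →
      (μ {ω | Y ω = 1 ∧ W ω ∈ A}).toReal = ∫ w in A, g w ∂ν := by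
    intro A hA
    rw [hkey A hA, hgdef,
      ← integral_toReal (hmeasg'.aemeasurable.restrict)
        (ae_of_all _ fun w => lt_of_le_of_lt (hbound w) ENNReal.one_lt_top)]
  have hfg : ∀ A : Set (Fin m → ℝ), MeasurableSet A →
      ∫ w in A, η w ∂ν = ∫ w in A, g w ∂ν := by
    intro A hA
    rw [← hver A hA, hkeyR A hA]
  -- g is integrable
  have hgsm : Measurable g := hmeasg'.ennreal_toReal
  have hg_int : Integrable g ν := by
    refine Integrable.mono' (integrable_const (1 : ℝ)) hgsm.aestronglyMeasurable ?_
    refine ae_of_all _ fun w => ?_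
    rw [Real.norm_eq_abs, abs_of_nonneg ENNReal.toReal_nonneg]
    exact ENNReal.toReal_le_of_le_ofReal one_pos.le (by simpa using hbound w)
  -- η = g a.e.
  have hae : ∀ᵐ w ∂ν, η w = g w := by
    have hAn : ∀ n : ℕ, MeasurableSet {w : Fin m → ℝ | |η w| ≤ (n : ℝ)} := fun n =>
      measurableSet_le hη.abs measurable_const
    have hrestr : ∀ n : ℕ, η =ᵐ[ν.restrict {w | |η w| ≤ (n : ℝ)}] g := by
      intro n
      have hint : IntegrableOn η {w | |η w| ≤ (n : ℝ)} ν := by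
        refine Integrable.mono' (integrable_const (n : ℝ))
          hη.aestronglyMeasurable.restrict ?_
        exact (ae_restrict_iff' (hAn n)).2 (ae_of_all _ fun w hw => hw)
      refine ae_eq_of_forall_setIntegral_eq_of_sigmaFinite
        (fun s hs _ => hint.integrableOn) (fun s hs _ => hg_int.integrableOn.integrableOn) ?_
      intro s hs _
      rw [Measure.restrict_restrict hs]
      exact hfg _ (hs.inter (hAn n))
    have h1 : ∀ᵐ w ∂ν, ∀ n : ℕ, |η w| ≤ (n : ℝ) → η w = g w := by
      rw [ae_all_iff]
      intro n
      exact (ae_restrict_iff' (hAn n)).1 (hrestr n)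
    filter_upwards [h1] with w hw
    obtain ⟨n, hn⟩ := exists_nat_ge |η w|
    exact hw n hn
  -- push condition (i) to ν
  have hi' : ∀ᵐ w ∂ν, κ₁ ≤ |∑ j, w j * θstar j| := by
    have hsm : MeasurableSet {w : Fin m → ℝ | κ₁ ≤ |∑ j, w j * θstar j|} :=
      measurableSet_le measurable_const hdot.abs
    rw [ae_iff]
    have : {w : Fin m → ℝ | ¬ κ₁ ≤ |∑ j, w j * θstar j|} =
        {w : Fin m → ℝ | κ₁ ≤ |∑ j, w j * θstar j|}ᶜ := rfl
    rw [this, hνdef, Measure.map_apply hW hsm.compl]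
    have : W ⁻¹' {w : Fin m → ℝ | κ₁ ≤ |∑ j, w j * θstar j|}ᶜ =
        {ω | κ₁ ≤ |∑ j, W ω j * θstar j|}ᶜ := rfl
    rw [this]
    have := measure_compl (s := {ω | κ₁ ≤ |∑ j, W ω j * θstar j|})
      (measurableSet_le measurable_const ((hdot.comp hW).abs)) (measure_ne_top μ _)
    rw [this, hi, measure_univ, tsub_self]
  obtain ⟨T, hTopen, hTsub, d, hd⟩ := hii
  filter_upwards [hae, hmed, hi', hd] with w hgw hmedw hiw hdw
  -- now pure real analysis for fixed w
  set F : ℝ → ℝ := fun t => (κξ w (Set.Iic t)).toReal with hFdef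
  have hFmono : Monotone F := fun a b hab =>
    ENNReal.toReal_mono (measure_ne_top _ _) (measure_mono (Set.Iic_subset_Iic.mpr hab))
  set D : Set ℝ := Set.Ioo (-κ₁) κ₁ with hDdef
  have hDint : interior D = D := isOpen_Ioo.interior_eq
  have hMVT : ∀ x ∈ D, ∀ y ∈ D, x ≤ y → κ₂ * (y - x) ≤ F y - F x := by
    refine Convex.mul_sub_le_image_sub_of_le_deriv (convex_Ioo _ _) ?_ ?_ ?_
    · intro x hx
      exact ((hdw x (hTsub hx)).1.differentiableAt.continuousAt).continuousWithinAt
    · intro x hx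
      rw [hDint] at hx
      exact (hdw x (hTsub hx)).1.differentiableAt.differentiableWithinAt
    · intro x hx
      rw [hDint] at hx
      rw [(hdw x (hTsub hx)).1.deriv]
      exact (hdw x (hTsub hx)).2
  have hF0 : 1 / 2 ≤ F 0 := hmedw.1
  have hIio : (κξ w (Set.Iio 0)).toReal ≤ 1 / 2 := by
    have hsum : κξ w (Set.Iio 0) + κξ w (Set.Ici 0) = 1 := by
      rw [← measure_union (Set.Iio_disjoint_Ici le_rfl) measurableSet_Ici,
        Set.Iio_union_Ici, measure_univ]
    have hsum' : (κξ w (Set.Iio 0)).toReal + (κξ w (Set.Ici 0)).toReal = 1 := by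
      rw [← ENNReal.toReal_add (measure_ne_top _ _) (measure_ne_top _ _), hsum,
        ENNReal.toReal_one]
    linarith [hmedw.2]
  -- main estimate for c ∈ (0, κ₁)
  have main : ∀ c ∈ Set.Ioo (0 : ℝ) κ₁, 2 * κ₂ * c ≤ |2 * η w - 1| := by
    rintro c ⟨hc0, hcκ⟩
    rcases le_abs.mp hiw with hpos | hneg
    · -- w·θ ≥ κ₁
      have hcD : c ∈ D := ⟨lt_trans (by linarith) hc0, hcκ⟩
      have h0D : (0 : ℝ) ∈ D := ⟨by linarith, hκ₁⟩
      have h1 : κ₂ * c ≤ F c - F 0 := by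
        have := hMVT 0 h0D c hcD hc0.le
        simpa using this
      have h2 : F c ≤ η w := by
        rw [hgw]
        exact hFmono (le_trans hcκ.le hpos)
      have h3 : 2 * κ₂ * c ≤ 2 * η w - 1 := by linarith
      exact le_trans h3 (le_abs_self _)
    · -- w·θ ≤ -κ₁
      have hwneg : (∑ j, w j * θstar j) ≤ -κ₁ := by linarith
      set s : ℝ := (κ₁ - c) / 2 with hsd
      have hs0 : 0 < s := by rw [hsd]; linarith
      have htκ : c + s < κ₁ := by rw [hsd]; linarith
      have hmtD : -(c + s) ∈ D := Set.mem_Ioo.mpr ⟨by rw [hsd]; linarith, by rw [hsd]; linarith⟩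
      have hmsD : -s ∈ D := Set.mem_Ioo.mpr ⟨by rw [hsd]; linarith, by rw [hsd]; linarith⟩
      have h1 : κ₂ * c ≤ F (-s) - F (-(c + s)) := by
        have := hMVT (-(c + s)) hmtD (-s) hmsD (by linarith)
        have heq : -s - -(c + s) = c := by ring
        rw [heq] at this
        exact this
      have h2 : η w ≤ F (-(c + s)) := by
        rw [hgw]
        exact hFmono (by linarith)
      have h3 : F (-s) ≤ 1 / 2 := by
        refine le_trans ?_ hIio
        exact ENNReal.toReal_mono (measure_ne_top _ _)
          (measure_mono (Set.Iic_subset_Iio.mpr (by linarith)))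
      have h4 : 2 * κ₂ * c ≤ -(2 * η w - 1) := by linarith
      exact le_trans h4 (neg_le_abs _)
  -- take the limit c → κ₁
  haveI : (Filter.NeBot (nhdsWithin κ₁ (Set.Ioo (0 : ℝ) κ₁))) :=
    right_nhdsWithin_Ioo_neBot hκ₁
  have htend : Filter.Tendsto (fun c : ℝ => 2 * κ₂ * c)
      (nhdsWithin κ₁ (Set.Ioo (0 : ℝ) κ₁)) (nhds (2 * κ₂ * κ₁)) :=
    ((continuous_const.mul continuous_id).tendsto κ₁).mono_left nhdsWithin_le_nhds
  have := le_of_tendsto htend (eventually_nhdsWithin_of_forall main)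
  linarith
end

section
/- Let (Y,W) be a random pair with Y ∈ {0,1}, η(w) = P(Y=1|W=w), b*(w) = 1{η(w) ≥ 1/2}, and S̃(b) = P(Y = b(W)). Suppose there exist universal positive constants C and α such that P(|η(W) − 1/2| ≤ t) ≤ C·t^α for all t > 0. Then the margin condition holds with exponent ϑ = (1+α)/α: there exists h > 0 such that S̃(b*) − S̃(b) ≥ h^ϑ·(E|b*(W) − b(W)|)^ϑ for every measurable binary predictor b : W → {0,1}. -/
set_option maxHeartbeats 1000000


open MeasureTheory ProbabilityTheory Real

/-- Tsybakov-type sufficient condition for the margin condition: if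
`P(|η(W) − 1/2| ≤ t) ≤ C·t^α` for all `t > 0`, then the margin condition holds with exponent
`ϑ = (1+α)/α`: there is `h > 0` with `S̃(b*) − S̃(b) ≥ h^ϑ·(E|b*(W) − b(W)|)^ϑ` for every
measurable binary predictor `b`. -/
theorem statement8
    {Ω E : Type*} [MeasurableSpace Ω] [MeasurableSpace E]
    (μ : Measure Ω) [IsProbabilityMeasure μ]
    (Y : Ω → ℝ) (W : Ω → E) (η : E → ℝ) (C α : ℝ)
    (hY : Measurable Y) (hW : Measurable W) (hη : Measurable η)
    (hY01 : ∀ ω, Y ω = 0 ∨ Y ω = 1)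
    -- η is a version of the conditional probability of Y = 1 given W:
    (hver : ∀ A : Set E, MeasurableSet A →
      (μ {ω | Y ω = 1 ∧ W ω ∈ A}).toReal = ∫ w in A, η w ∂(Measure.map W μ))
    (hC : 0 < C) (hα : 0 < α)
    -- P(|η(W) − 1/2| ≤ t) ≤ C·t^α for all t > 0
    (hmarginP : ∀ t : ℝ, 0 < t →
      (μ {ω | |η (W ω) - 1 / 2| ≤ t}).toReal ≤ C * t ^ α) :
    ∃ h : ℝ, 0 < h ∧
      ∀ b : E → ℝ, Measurable b → (∀ w, b w = 0 ∨ b w = 1) →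
        h ^ ((1 + α) / α) * (∫ ω, |(if (1 : ℝ) / 2 ≤ η (W ω) then (1 : ℝ) else 0) - b (W ω)| ∂μ)
              ^ ((1 + α) / α)
          ≤ (μ {ω | Y ω = (if (1 : ℝ) / 2 ≤ η (W ω) then 1 else 0)}).toReal
            - (μ {ω | Y ω = b (W ω)}).toReal := by
  classical
  set ν : Measure E := Measure.map W μ with hνdef
  have hνprob : IsProbabilityMeasure ν := Measure.isProbabilityMeasure_map hW.aemeasurable
  have hνapp : ∀ A : Set E, MeasurableSet A → ν A = μ (W ⁻¹' A) := by
    intro A hA; exact Measure.map_apply hW hA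
  -- real-valued set functions
  set r : Set E → ℝ := fun A => (ν A).toReal with hrdef
  set m : Set E → ℝ := fun A => (μ {ω | Y ω = 1 ∧ W ω ∈ A}).toReal with hmdef
  have hr_nonneg : ∀ A, 0 ≤ r A := fun A => ENNReal.toReal_nonneg
  have hm_nonneg : ∀ A, 0 ≤ m A := fun A => ENNReal.toReal_nonneg
  have hsetY1 : ∀ A : Set E, {ω | Y ω = 1 ∧ W ω ∈ A} = Y ⁻¹' {1} ∩ W ⁻¹' A := by
    intro A; rfl
  have hmeasY1 : ∀ A : Set E, MeasurableSet A → MeasurableSet {ω | Y ω = 1 ∧ W ω ∈ A} := by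
    intro A hA; rw [hsetY1]; exact (hY (measurableSet_singleton 1)).inter (hW hA)
  have hm_mono : ∀ A B : Set E, A ⊆ B → m A ≤ m B := by
    intro A B hAB
    exact ENNReal.toReal_mono (measure_ne_top μ _)
      (measure_mono (fun ω hω => ⟨hω.1, hAB hω.2⟩))
  have hr_mono : ∀ A B : Set E, A ⊆ B → r A ≤ r B := by
    intro A B hAB
    exact ENNReal.toReal_mono (measure_ne_top ν _) (measure_mono hAB)
  have hm_le_r : ∀ A : Set E, MeasurableSet A → m A ≤ r A := by
    intro A hA
    have : μ {ω | Y ω = 1 ∧ W ω ∈ A} ≤ μ (W ⁻¹' A) :=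
      measure_mono (fun ω hω => hω.2)
    rw [hrdef]; simp only [hνapp A hA]
    exact ENNReal.toReal_mono (measure_ne_top μ _) this
  have hm_add : ∀ A B : Set E, MeasurableSet B → Disjoint A B → m (A ∪ B) = m A + m B := by
    intro A B hB hAB
    have hset : {ω | Y ω = 1 ∧ W ω ∈ A ∪ B}
        = {ω | Y ω = 1 ∧ W ω ∈ A} ∪ {ω | Y ω = 1 ∧ W ω ∈ B} := by
      ext ω; simp [Set.mem_union]; tauto
    have hdisj : Disjoint {ω | Y ω = 1 ∧ W ω ∈ A} {ω | Y ω = 1 ∧ W ω ∈ B} := by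
      rw [Set.disjoint_left]; intro ω h1 h2
      exact Set.disjoint_left.1 hAB h1.2 h2.2
    rw [hmdef]; simp only [hset]
    rw [measure_union hdisj (hmeasY1 B hB),
      ENNReal.toReal_add (measure_ne_top μ _) (measure_ne_top μ _)]
  have hr_add : ∀ A B : Set E, MeasurableSet B → Disjoint A B → r (A ∪ B) = r A + r B := by
    intro A B hB hAB
    rw [hrdef]; simp only
    rw [measure_union hAB hB,
      ENNReal.toReal_add (measure_ne_top ν _) (measure_ne_top ν _)]
  have hver' : ∀ A : Set E, MeasurableSet A → m A = ∫ w in A, η w ∂ν := by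
    intro A hA; exact hver A hA
  -- the good set where η ∈ [0,1]
  set G : Set E := {w | 0 ≤ η w ∧ η w ≤ 1} with hGdef
  have hGmeas : MeasurableSet G :=
    (measurableSet_le measurable_const hη).inter (measurableSet_le hη measurable_const)
  have hIntBdd : ∀ (A : Set E) (Mb : ℝ), MeasurableSet A → (∀ w ∈ A, |η w| ≤ Mb) →
      IntegrableOn η A ν := by
    intro A Mb hA hbd
    have hc : IntegrableOn (fun _ => Mb) A ν :=
      integrableOn_const (measure_lt_top ν A).ne
    exact Integrable.mono' hc hη.aestronglyMeasurable.restrict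
      ((ae_restrict_iff' hA).2 (Filter.Eventually.of_forall hbd))
  have hνzero : ∀ A : Set E, MeasurableSet A → r A = 0 → ν A = 0 := by
    intro A hA h0
    have := (ENNReal.toReal_eq_zero_iff (ν A)).1 h0
    exact this.resolve_right (measure_ne_top ν A)
  have hGnull : ν Gᶜ = 0 := by
    have key_hi : ∀ k n : ℕ, ν {w | 1 + ((k : ℝ) + 1)⁻¹ ≤ η w ∧ η w ≤ n} = 0 := by
      intro k n
      set A := {w | 1 + ((k : ℝ) + 1)⁻¹ ≤ η w ∧ η w ≤ n} with hA
      have hAmeas : MeasurableSet A :=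
        (measurableSet_le measurable_const hη).inter (measurableSet_le hη measurable_const)
      have hkpos : (0:ℝ) < ((k : ℝ) + 1)⁻¹ := by positivity
      have hint : IntegrableOn η A ν := by
        refine hIntBdd A n hAmeas (fun w hw => ?_)
        rw [abs_le]; exact ⟨by nlinarith [hw.1, hw.2], hw.2⟩
      have hlow : (1 + ((k : ℝ) + 1)⁻¹) * r A ≤ m A := by
        rw [hver' A hAmeas]
        have hmono := setIntegral_mono_on
          (integrableOn_const (measure_lt_top ν A).ne) hint hAmeas
          (fun w hw => hw.1)
        rwa [setIntegral_const, smul_eq_mul, mul_comm] at hmono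
      have hup : m A ≤ r A := hm_le_r A hAmeas
      have hr0 : r A = 0 := by
        have h1 : r A ≤ 0 := by nlinarith [hr_nonneg A]
        exact le_antisymm h1 (hr_nonneg A)
      exact hνzero A hAmeas hr0
    have key_lo : ∀ k n : ℕ, ν {w | -(n : ℝ) ≤ η w ∧ η w ≤ -((k : ℝ) + 1)⁻¹} = 0 := by
      intro k n
      set A := {w | -(n : ℝ) ≤ η w ∧ η w ≤ -((k : ℝ) + 1)⁻¹} with hA
      have hAmeas : MeasurableSet A :=
        (measurableSet_le measurable_const hη).inter (measurableSet_le hη measurable_const)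
      have hkpos : (0:ℝ) < ((k : ℝ) + 1)⁻¹ := by positivity
      have hint : IntegrableOn η A ν := by
        refine hIntBdd A n hAmeas (fun w hw => ?_)
        rw [abs_le]; exact ⟨hw.1, by nlinarith [hw.1, hw.2]⟩
      have hup : m A ≤ -((k : ℝ) + 1)⁻¹ * r A := by
        rw [hver' A hAmeas]
        have hmono := setIntegral_mono_on hint
          (integrableOn_const (measure_lt_top ν A).ne) hAmeas
          (fun w hw => hw.2)
        rwa [setIntegral_const, smul_eq_mul, mul_comm] at hmono
      have hr0 : r A = 0 := by
        have h1 : r A ≤ 0 := by nlinarith [hm_nonneg A, hr_nonneg A]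
        exact le_antisymm h1 (hr_nonneg A)
      exact hνzero A hAmeas hr0
    have hsub : Gᶜ ⊆ (⋃ k : ℕ, ⋃ n : ℕ, {w | 1 + ((k : ℝ) + 1)⁻¹ ≤ η w ∧ η w ≤ n})
        ∪ (⋃ k : ℕ, ⋃ n : ℕ, {w | -(n : ℝ) ≤ η w ∧ η w ≤ -((k : ℝ) + 1)⁻¹}) := by
      intro w hw
      simp only [hGdef, Set.mem_compl_iff, Set.mem_setOf_eq, not_and_or, not_le] at hw
      rcases hw with hneg | hbig
      · right
        obtain ⟨k, hk⟩ := exists_nat_one_div_lt (show (0:ℝ) < -η w by linarith)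
        obtain ⟨n, hn⟩ := exists_nat_gt (-η w)
        refine Set.mem_iUnion.2 ⟨k, Set.mem_iUnion.2 ⟨n, ?_⟩⟩
        rw [one_div] at hk
        exact ⟨by linarith, by linarith⟩
      · left
        obtain ⟨k, hk⟩ := exists_nat_one_div_lt (show (0:ℝ) < η w - 1 by linarith)
        obtain ⟨n, hn⟩ := exists_nat_gt (η w)
        refine Set.mem_iUnion.2 ⟨k, Set.mem_iUnion.2 ⟨n, ?_⟩⟩
        rw [one_div] at hk
        exact ⟨by linarith, by linarith⟩
    refine measure_mono_null hsub ?_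
    refine measure_union_null ?_ ?_ <;>
      exact measure_iUnion_null fun k => measure_iUnion_null fun n => by
        first
        | exact key_hi k n
        | exact key_lo k n
  -- F2 and F3
  have haeq : ∀ A : Set E, A =ᵐ[ν] ((A ∩ G : Set E)) := by
    intro A
    rw [MeasureTheory.ae_eq_set]
    constructor
    · refine measure_mono_null (fun w hw => ?_) hGnull
      intro hG; exact hw.2 ⟨hw.1, hG⟩
    · rw [Set.diff_eq_empty.2 (Set.inter_subset_left (s := A) (t := G))]
      exact measure_empty
  have hreq : ∀ A : Set E, r (A ∩ G) = r A := by
    intro A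
    rw [hrdef]; simp only
    rw [measure_congr (haeq A).symm]
  have hintG : ∀ A : Set E, MeasurableSet A → IntegrableOn η (A ∩ G) ν := by
    intro A hA
    exact hIntBdd _ 1 (hA.inter hGmeas)
      (fun w hw => abs_le.2 ⟨by linarith [hw.2.1], hw.2.2⟩)
  have hF2 : ∀ (A : Set E) (c : ℝ), MeasurableSet A → 0 ≤ c → (∀ w ∈ A, c ≤ η w) →
      c * r A ≤ m A := by
    intro A c hA hc hle
    have hA' : MeasurableSet (A ∩ G) := hA.inter hGmeas
    have hmono := setIntegral_mono_on
      (integrableOn_const (measure_lt_top ν (A ∩ G)).ne) (hintG A hA) hA'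
      (fun w hw => hle w hw.1)
    rw [setIntegral_const, smul_eq_mul, mul_comm] at hmono
    calc c * r A = c * r (A ∩ G) := by rw [hreq]
      _ ≤ ∫ w in A ∩ G, η w ∂ν := hmono
      _ = m (A ∩ G) := (hver' _ hA').symm
      _ ≤ m A := hm_mono _ _ Set.inter_subset_left
  have hF3 : ∀ (A : Set E) (c : ℝ), MeasurableSet A → 0 ≤ c → (∀ w ∈ A, η w ≤ c) →
      m A ≤ c * r A := by
    intro A c hA hc hle
    have hA' : MeasurableSet (A ∩ G) := hA.inter hGmeas
    have hmono := setIntegral_mono_on (hintG A hA)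
      (integrableOn_const (measure_lt_top ν (A ∩ G)).ne) hA'
      (fun w hw => hle w hw.1)
    rw [setIntegral_const, smul_eq_mul, mul_comm] at hmono
    calc m A = ∫ w in A, η w ∂ν := hver' A hA
      _ = ∫ w in A ∩ G, η w ∂ν := setIntegral_congr_set (haeq A)
      _ ≤ c * r (A ∩ G) := hmono
      _ = c * r A := by rw [hreq]
  -- decomposition of the success probability
  have hS : ∀ f : E → ℝ, Measurable f → (∀ w, f w = 0 ∨ f w = 1) →
      (μ {ω | Y ω = f (W ω)}).toReal
        = m (f ⁻¹' {1}) + (r ((f ⁻¹' {1})ᶜ) - m ((f ⁻¹' {1})ᶜ)) := by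
    intro f hf hf01
    set Af := f ⁻¹' {1} with hAfdef
    have hAfmeas : MeasurableSet Af := hf (measurableSet_singleton 1)
    set S1 := {ω | Y ω = 1 ∧ W ω ∈ Af} with hS1def
    set S1c := {ω | Y ω = 1 ∧ W ω ∈ Afᶜ} with hS1cdef
    set S0 := {ω | Y ω = 0 ∧ W ω ∈ Afᶜ} with hS0def
    have hS0meas : MeasurableSet S0 := by
      have : S0 = Y ⁻¹' {0} ∩ W ⁻¹' Afᶜ := rfl
      rw [this]
      exact (hY (measurableSet_singleton 0)).inter (hW hAfmeas.compl)
    have hset1 : {ω | Y ω = f (W ω)} = S1 ∪ S0 := by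
      ext ω
      simp only [hS1def, hS0def, Set.mem_setOf_eq, Set.mem_union, Set.mem_compl_iff,
        Set.mem_preimage, Set.mem_singleton_iff, hAfdef]
      rcases hY01 ω with h | h <;> rcases hf01 (W ω) with h' | h' <;>
        simp [h, h'] <;> norm_num
    have hset2 : (W ⁻¹' Afᶜ) = S1c ∪ S0 := by
      ext ω
      simp only [hS1cdef, hS0def, Set.mem_setOf_eq, Set.mem_union, Set.mem_compl_iff,
        Set.mem_preimage, Set.mem_singleton_iff, hAfdef]
      rcases hY01 ω with h | h <;> simp [h]
    have hd1 : Disjoint S1 S0 := by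
      rw [Set.disjoint_left]
      rintro ω ⟨h1, -⟩ ⟨h0, -⟩
      rw [h1] at h0; norm_num at h0
    have hd2 : Disjoint S1c S0 := by
      rw [Set.disjoint_left]
      rintro ω ⟨h1, -⟩ ⟨h0, -⟩
      rw [h1] at h0; norm_num at h0
    have heq1 : (μ {ω | Y ω = f (W ω)}).toReal = (μ S1).toReal + (μ S0).toReal := by
      rw [hset1, measure_union hd1 hS0meas,
        ENNReal.toReal_add (measure_ne_top μ _) (measure_ne_top μ _)]
    have heq2 : r Afᶜ = (μ S1c).toReal + (μ S0).toReal := by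
      rw [hrdef]; simp only
      rw [hνapp _ hAfmeas.compl, hset2, measure_union hd2 hS0meas,
        ENNReal.toReal_add (measure_ne_top μ _) (measure_ne_top μ _)]
    have hm1 : m Af = (μ S1).toReal := rfl
    have hm2 : m Afᶜ = (μ S1c).toReal := rfl
    rw [heq1, hm1, hm2]
    linarith [heq2]
  have hϑpos : (0:ℝ) < (1 + α) / α := by positivity
  refine ⟨(2 * C) ^ (-(1 / (1 + α))), Real.rpow_pos_of_pos (by linarith) _, ?_⟩
  intro b hb hb01
  set g : E → ℝ := fun w => if (1:ℝ)/2 ≤ η w then 1 else 0 with hgdef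
  have hg : Measurable g :=
    Measurable.ite (measurableSet_le measurable_const hη) measurable_const measurable_const
  have hg01 : ∀ w, g w = 0 ∨ g w = 1 := fun w => by
    by_cases h : (1:ℝ)/2 ≤ η w
    · right
      show (if (1:ℝ)/2 ≤ η w then (1:ℝ) else 0) = 1
      rw [if_pos h]
    · left
      show (if (1:ℝ)/2 ≤ η w then (1:ℝ) else 0) = 0
      rw [if_neg h]
  set Astar : Set E := {w | (1:ℝ)/2 ≤ η w} with hAstardef
  have hAstarmeas : MeasurableSet Astar := measurableSet_le measurable_const hη
  have hgpre : g ⁻¹' {1} = Astar := by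
    ext w; by_cases h : (1:ℝ)/2 ≤ η w <;> simp [hgdef, h, hAstardef]
  set Ab : Set E := b ⁻¹' {1} with hAbdef
  have hAbmeas : MeasurableSet Ab := hb (measurableSet_singleton 1)
  have hgoalset : {ω | Y ω = (if (1:ℝ)/2 ≤ η (W ω) then 1 else 0)}
      = {ω | Y ω = g (W ω)} := rfl
  rw [hgoalset, hS g hg hg01, hS b hb hb01, hgpre]
  -- the four pieces
  set Q : Set E := Astar \ Ab with hQdef
  set R : Set E := Ab \ Astar with hRdef
  set P : Set E := Astar ∩ Ab with hPdef
  set T : Set E := (Astar ∪ Ab)ᶜ with hTdef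
  have hQmeas : MeasurableSet Q := hAstarmeas.diff hAbmeas
  have hRmeas : MeasurableSet R := hAbmeas.diff hAstarmeas
  have hPmeas : MeasurableSet P := hAstarmeas.inter hAbmeas
  have hTmeas : MeasurableSet T := (hAstarmeas.union hAbmeas).compl
  have heq_star : Astar = P ∪ Q := (Set.inter_union_diff Astar Ab).symm
  have heq_b : Ab = P ∪ R := by
    ext w; simp only [hPdef, hRdef, Set.mem_union, Set.mem_inter_iff, Set.mem_diff]; tauto
  have heq_starc : Astarᶜ = R ∪ T := by
    ext w
    simp only [hRdef, hTdef, Set.mem_union, Set.mem_compl_iff, Set.mem_diff]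
    tauto
  have heq_bc : Abᶜ = Q ∪ T := by
    ext w
    simp only [hQdef, hTdef, Set.mem_union, Set.mem_compl_iff, Set.mem_diff]
    tauto
  have hdPQ : Disjoint P Q := by
    rw [Set.disjoint_left]; rintro w ⟨-, h2⟩ ⟨-, h4⟩; exact h4 h2
  have hdPR : Disjoint P R := by
    rw [Set.disjoint_left]; rintro w ⟨h1, -⟩ ⟨-, h4⟩; exact h4 h1
  have hdRT : Disjoint R T := by
    rw [Set.disjoint_left]; rintro w ⟨h1, -⟩ h2; exact h2 (Or.inr h1)
  have hdQT : Disjoint Q T := by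
    rw [Set.disjoint_left]; rintro w ⟨h1, -⟩ h2; exact h2 (Or.inl h1)
  have hm_star : m Astar = m P + m Q := by rw [heq_star]; exact hm_add P Q hQmeas hdPQ
  have hr_star : r Astar = r P + r Q := by rw [heq_star]; exact hr_add P Q hQmeas hdPQ
  have hm_b : m Ab = m P + m R := by rw [heq_b]; exact hm_add P R hRmeas hdPR
  have hr_b : r Ab = r P + r R := by rw [heq_b]; exact hr_add P R hRmeas hdPR
  have hm_starc : m Astarᶜ = m R + m T := by rw [heq_starc]; exact hm_add R T hTmeas hdRT
  have hr_starc : r Astarᶜ = r R + r T := by rw [heq_starc]; exact hr_add R T hTmeas hdRT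
  have hm_bc : m Abᶜ = m Q + m T := by rw [heq_bc]; exact hm_add Q T hTmeas hdQT
  have hr_bc : r Abᶜ = r Q + r T := by rw [heq_bc]; exact hr_add Q T hTmeas hdQT
  have hD : (m Astar + (r Astarᶜ - m Astarᶜ)) - (m Ab + (r Abᶜ - m Abᶜ))
      = (2*m Q - r Q) + (r R - 2*m R) := by
    rw [hm_star, hm_b, hm_starc, hr_starc, hm_bc, hr_bc]; ring
  -- facts about η on Q and R
  have hQeta : ∀ w ∈ Q, (1:ℝ)/2 ≤ η w := fun w hw => hw.1
  have hReta : ∀ w ∈ R, η w < 1/2 := fun w hw => not_le.1 hw.2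
  -- key inequality for every t > 0
  have hkey : ∀ t : ℝ, 0 < t →
      2*t*((r Q + r R) - C * t ^ α) ≤ (2*m Q - r Q) + (r R - 2*m R) := by
    intro t ht
    set M : Set E := {w | |η w - 1/2| ≤ t} with hMdef
    have hMmeas : MeasurableSet M :=
      measurableSet_le (hη.sub measurable_const).abs measurable_const
    have hdQM : Disjoint (Q ∩ M) (Q \ M) :=
      disjoint_sdiff_self_right.mono_left Set.inter_subset_right
    have hdRM : Disjoint (R ∩ M) (R \ M) :=
      disjoint_sdiff_self_right.mono_left Set.inter_subset_right
    have hmQ : m Q = m (Q ∩ M) + m (Q \ M) := by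
      have h := hm_add (Q ∩ M) (Q \ M) (hQmeas.diff hMmeas) hdQM
      rw [Set.inter_union_diff] at h; exact h
    have hrQ : r Q = r (Q ∩ M) + r (Q \ M) := by
      have h := hr_add (Q ∩ M) (Q \ M) (hQmeas.diff hMmeas) hdQM
      rw [Set.inter_union_diff] at h; exact h
    have hmR : m R = m (R ∩ M) + m (R \ M) := by
      have h := hm_add (R ∩ M) (R \ M) (hRmeas.diff hMmeas) hdRM
      rw [Set.inter_union_diff] at h; exact h
    have hrR : r R = r (R ∩ M) + r (R \ M) := by
      have h := hr_add (R ∩ M) (R \ M) (hRmeas.diff hMmeas) hdRM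
      rw [Set.inter_union_diff] at h; exact h
    have ha : (1:ℝ)/2 * r (Q ∩ M) ≤ m (Q ∩ M) :=
      hF2 _ _ (hQmeas.inter hMmeas) (by norm_num) (fun w hw => hQeta w hw.1)
    have hbq : ((1:ℝ)/2 + t) * r (Q \ M) ≤ m (Q \ M) := by
      refine hF2 _ _ (hQmeas.diff hMmeas) (by linarith) (fun w hw => ?_)
      have h1 : (1:ℝ)/2 ≤ η w := hQeta w hw.1
      have h2 : t < |η w - 1/2| := not_le.1 hw.2
      rw [abs_of_nonneg (by linarith)] at h2
      linarith
    have hc' : m (R ∩ M) ≤ (1:ℝ)/2 * r (R ∩ M) :=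
      hF3 _ _ (hRmeas.inter hMmeas) (by norm_num) (fun w hw => le_of_lt (hReta w hw.1))
    have hd' : 2*t*(r (R \ M)) ≤ r (R \ M) - 2*m (R \ M) := by
      by_cases ht2 : t ≤ 1/2
      · have h := hF3 (R \ M) ((1:ℝ)/2 - t) (hRmeas.diff hMmeas) (by linarith)
          (fun w hw => by
            have h1 : η w < 1/2 := hReta w hw.1
            have h2 : t < |η w - 1/2| := not_le.1 hw.2
            rw [abs_of_nonpos (by linarith)] at h2
            linarith)
        have h3 : 2*(((1:ℝ)/2 - t)*r (R \ M)) = r (R \ M) - 2*(t*r (R \ M)) := by ring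
        have h4 : 2*t*(r (R \ M)) = 2*(t*r (R \ M)) := by ring
        linarith [h, h3, h4]
      · have hsub : R \ M ⊆ Gᶜ := by
          intro w hw
          have h1 : η w < 1/2 := hReta w hw.1
          have h2 : t < |η w - 1/2| := not_le.1 hw.2
          rw [abs_of_nonpos (by linarith)] at h2
          intro hG
          have : (0:ℝ) ≤ η w := hG.1
          linarith
        have hr0 : r (R \ M) = 0 := by
          have h1 : r (R \ M) ≤ r Gᶜ := hr_mono _ _ hsub
          have h2 : r Gᶜ = 0 := by
            simp only [hrdef]; rw [hGnull, ENNReal.toReal_zero]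
          linarith [hr_nonneg (R \ M)]
        have hm0 : m (R \ M) = 0 := by
          have h1 : m (R \ M) ≤ r (R \ M) := hm_le_r _ (hRmeas.diff hMmeas)
          linarith [hm_nonneg (R \ M)]
        rw [hr0, hm0]; norm_num
    have hdisjQR : Disjoint (Q ∩ M) (R ∩ M) := by
      rw [Set.disjoint_left]; rintro w ⟨⟨-, h2⟩, -⟩ ⟨⟨h3, -⟩, -⟩; exact h2 h3
    have hmarg : r (Q ∩ M) + r (R ∩ M) ≤ C * t ^ α := by
      have h1 : r (Q ∩ M) + r (R ∩ M) = r ((Q ∩ M) ∪ (R ∩ M)) :=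
        (hr_add _ _ (hRmeas.inter hMmeas) hdisjQR).symm
      have h2 : r ((Q ∩ M) ∪ (R ∩ M)) ≤ r M := by
        refine hr_mono _ _ ?_
        rintro w (hw | hw) <;> exact hw.2
      have h3 : r M = (μ {ω | |η (W ω) - 1/2| ≤ t}).toReal := by
        rw [hrdef]; simp only; rw [hνapp M hMmeas]; rfl
      have h4 := hmarginP t ht
      rw [h3] at h2
      linarith
    have h5 : (r Q + r R) - C * t ^ α ≤ r (Q \ M) + r (R \ M) := by linarith
    have h6 : 2*t*((r Q + r R) - C*t^α) ≤ 2*t*(r (Q \ M) + r (R \ M)) :=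
      mul_le_mul_of_nonneg_left h5 (by linarith)
    nlinarith [ha, hbq, hc', hd', hmQ, hmR, hrQ, hrR]
  -- the expected absolute difference equals r Q + r R
  have hdisjQR' : Disjoint Q R := by
    rw [Set.disjoint_left]; rintro w ⟨h1, -⟩ ⟨-, h4⟩; exact h4 h1
  have hintegral : (∫ ω, |(if (1:ℝ)/2 ≤ η (W ω) then (1:ℝ) else 0) - b (W ω)| ∂μ)
      = r Q + r R := by
    have hfun : (fun ω => |(if (1:ℝ)/2 ≤ η (W ω) then (1:ℝ) else 0) - b (W ω)|)
        = (W ⁻¹' (Q ∪ R)).indicator (fun _ => (1:ℝ)) := by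
      funext ω
      rcases hb01 (W ω) with h | h <;> by_cases h2 : (1:ℝ)/2 ≤ η (W ω)
      · have hm' : ω ∈ W ⁻¹' (Q ∪ R) := by
          refine Set.mem_union_left _ ⟨h2, fun hc => ?_⟩
          have hc' : b (W ω) = 1 := hc
          rw [h] at hc'; norm_num at hc'
        rw [Set.indicator_of_mem hm', if_pos h2, h]
        norm_num
      · have hm' : ω ∉ W ⁻¹' (Q ∪ R) := by
          intro hmem
          rcases hmem with hc | hc
          · exact h2 hc.1
          · have hc' : b (W ω) = 1 := hc.1
            rw [h] at hc'; norm_num at hc'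
        rw [Set.indicator_of_notMem hm', if_neg h2, h]
        norm_num
      · have hm' : ω ∉ W ⁻¹' (Q ∪ R) := by
          intro hmem
          rcases hmem with hc | hc
          · exact hc.2 h
          · exact hc.2 h2
        rw [Set.indicator_of_notMem hm', if_pos h2, h]
        norm_num
      · have hm' : ω ∈ W ⁻¹' (Q ∪ R) := Set.mem_union_right _ ⟨h, h2⟩
        rw [Set.indicator_of_mem hm', if_neg h2, h]
        norm_num
    rw [hfun]
    have h1 : ∫ ω, (W ⁻¹' (Q ∪ R)).indicator (fun _ => (1:ℝ)) ω ∂μ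
        = (μ (W ⁻¹' (Q ∪ R))).toReal := integral_indicator_one (hW (hQmeas.union hRmeas))
    rw [h1, ← hνapp _ (hQmeas.union hRmeas), ← ENNReal.toReal_add (measure_ne_top ν _)
      (measure_ne_top ν _), ← measure_union hdisjQR' hRmeas]
  rw [hintegral, hD]
  rcases eq_or_lt_of_le (add_nonneg (hr_nonneg Q) (hr_nonneg R)) with hp | hp
  · rw [← hp, Real.zero_rpow (ne_of_gt hϑpos), mul_zero]
    have h1 := hF2 Q (1/2) hQmeas (by norm_num) hQeta
    have h2 := hF3 R (1/2) hRmeas (by norm_num) (fun w hw => le_of_lt (hReta w hw))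
    linarith
  · set p := r Q + r R with hpdef
    have h2C : (0:ℝ) < 2*C := by linarith
    set t := (p / (2*C)) ^ (α⁻¹) with htdef
    have htpos : 0 < t := Real.rpow_pos_of_pos (by positivity) _
    have htα : t ^ α = p / (2*C) :=
      Real.rpow_inv_rpow (le_of_lt (by positivity)) (ne_of_gt hα)
    have hkey' := hkey t htpos
    have hCt : C * t ^ α = p / 2 := by
      rw [htα]; field_simp
    have h1α : (1:ℝ) + α ≠ 0 := by positivity
    have hexp : ((2*C) ^ (-(1/(1+α)))) ^ ((1+α)/α) = (2*C) ^ (-α⁻¹) := by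
      rw [← Real.rpow_mul (le_of_lt h2C)]
      congr 1
      field_simp
    have hp_pow : p ^ ((1+α)/α) = p ^ (α⁻¹) * p := by
      have he : (1+α)/α = α⁻¹ + 1 := by field_simp
      rw [he, Real.rpow_add hp, Real.rpow_one]
    have ht_eq : t = p ^ (α⁻¹) * ((2*C) ^ (α⁻¹))⁻¹ := by
      rw [htdef, Real.div_rpow (le_of_lt hp) (le_of_lt h2C), div_eq_mul_inv]
    have hfin : ((2*C) ^ (-(1/(1+α)))) ^ ((1+α)/α) * p ^ ((1+α)/α) = t * p := by
      rw [hexp, hp_pow, ht_eq, Real.rpow_neg (le_of_lt h2C)]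
      ring
    rw [hfin]
    have : 2*t*(p - C * t^α) = t * p := by rw [hCt]; ring
    linarith
end

section
/- Let Z be a random vector in ℝ^m such that ‖Z‖ ≤ L₂ with probability 1 (Euclidean norm) and the smallest eigenvalue of the matrix E(ZZ') is bounded below by L₃ > 0. Then for every δ ∈ ℝ^m, E|Z'δ| ≥ (L₃/L₂)·‖δ‖. -/
open MeasureTheory

/-- if `‖Z‖ ≤ L₂` almost surely and the smallest eigenvalue of `E(ZZ')` is at
least `L₃ > 0`, then `E|Z'δ| ≥ (L₃/L₂)·‖δ‖` for every `δ ∈ ℝ^m`. -/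
theorem statement15
    {Ω : Type*} [MeasurableSpace Ω] (μ : Measure Ω) [IsProbabilityMeasure μ]
    (m : ℕ) (Z : Ω → Fin m → ℝ) (hZ : Measurable Z)
    (L₂ L₃ : ℝ) (hL₂ : 0 < L₂) (hL₃ : 0 < L₃)
    -- ‖Z‖ ≤ L₂ with probability one (Euclidean norm):
    (hbdd : ∀ᵐ ω ∂μ, Real.sqrt (∑ j, (Z ω j) ^ 2) ≤ L₂)
    -- the smallest eigenvalue of E(ZZ') is bounded below by L₃:
    (heig : ∀ δ : Fin m → ℝ, L₃ * ∑ j, (δ j) ^ 2 ≤ ∫ ω, (∑ j, Z ω j * δ j) ^ 2 ∂μ) :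
    ∀ δ : Fin m → ℝ,
      (L₃ / L₂) * Real.sqrt (∑ j, (δ j) ^ 2) ≤ ∫ ω, |∑ j, Z ω j * δ j| ∂μ := by
  intro δ
  set s : ℝ := Real.sqrt (∑ j, (δ j) ^ 2) with hs
  have hs0 : 0 ≤ s := Real.sqrt_nonneg _
  set X : Ω → ℝ := fun ω => ∑ j, Z ω j * δ j with hX
  have hXmeas : Measurable X := by
    apply Finset.measurable_sum
    intro j _
    exact ((measurable_pi_apply j).comp hZ).mul measurable_const
  -- pointwise Cauchy-Schwarz: |X ω| ≤ sqrt(∑ Z²) * s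
  have hptw : ∀ ω, |X ω| ≤ Real.sqrt (∑ j, (Z ω j) ^ 2) * s := by
    intro ω
    have h := Finset.sum_mul_sq_le_sq_mul_sq Finset.univ (fun j => Z ω j) δ
    calc |X ω| = Real.sqrt ((X ω) ^ 2) := (Real.sqrt_sq_eq_abs _).symm
      _ ≤ Real.sqrt ((∑ j, (Z ω j) ^ 2) * ∑ j, (δ j) ^ 2) := Real.sqrt_le_sqrt h
      _ = Real.sqrt (∑ j, (Z ω j) ^ 2) * s := Real.sqrt_mul (by positivity) _
  -- a.e. bound |X| ≤ L₂ * s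
  have hae : ∀ᵐ ω ∂μ, |X ω| ≤ L₂ * s := by
    filter_upwards [hbdd] with ω hω
    exact (hptw ω).trans (mul_le_mul_of_nonneg_right hω hs0)
  have hIntAbs : Integrable (fun ω => |X ω|) μ := by
    refine Integrable.mono' (integrable_const (L₂ * s)) hXmeas.abs.aestronglyMeasurable ?_
    filter_upwards [hae] with ω hω
    simpa [abs_abs] using hω
  have hIntSq : Integrable (fun ω => (X ω) ^ 2) μ := by
    refine Integrable.mono' (integrable_const ((L₂ * s) ^ 2)) (hXmeas.pow_const 2).aestronglyMeasurable ?_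
    filter_upwards [hae] with ω hω
    have : |X ω| ^ 2 ≤ (L₂ * s) ^ 2 := pow_le_pow_left₀ (abs_nonneg _) hω 2
    calc ‖X ω ^ 2‖ = |X ω| ^ 2 := by rw [Real.norm_eq_abs, abs_pow, sq_abs]
      _ ≤ (L₂ * s) ^ 2 := this
  -- main inequality chain
  have hkey : L₃ * s ^ 2 ≤ L₂ * s * ∫ ω, |X ω| ∂μ := by
    have h1 : L₃ * s ^ 2 ≤ ∫ ω, (X ω) ^ 2 ∂μ := by
      have := heig δ
      rwa [hs, Real.sq_sqrt (by positivity)]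
    have h2 : ∫ ω, (X ω) ^ 2 ∂μ ≤ ∫ ω, L₂ * s * |X ω| ∂μ := by
      refine integral_mono_ae hIntSq (hIntAbs.const_mul _) ?_
      filter_upwards [hae] with ω hω
      calc (X ω) ^ 2 = |X ω| * |X ω| := by rw [← sq_abs, sq]
        _ ≤ L₂ * s * |X ω| := mul_le_mul_of_nonneg_right hω (abs_nonneg _)
    rw [integral_const_mul] at h2
    linarith
  rcases eq_or_lt_of_le hs0 with h | h
  · rw [← h, mul_zero]
    exact integral_nonneg fun ω => abs_nonneg _
  · rw [div_mul_eq_mul_div, div_le_iff₀ hL₂]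
    have := hkey
    nlinarith [integral_nonneg (μ := μ) (f := fun ω => |X ω|) (fun ω => abs_nonneg (X ω))]
end

section
/- Let σ > 0 and suppose M_σ ≥ 1, s ≥ 1, and max(p,n) ≥ 3, and let r_n = max(s·ln(max(p,n)), 1). If 4·[ln s + ln(ln(max(p,n))) + ln M_σ] ≤ (1/2)·ln(max(p,n)), then (4s+4)·ln(M_σ·r_n) ≤ r_n + (6s+5)·ln 2; that is, the sufficient condition (suff condition on r_n) implies the condition required for the non-asymptotic tail bound of Theorem 1. -/
open Real

noncomputable section

/-- the sufficient condition
`4·[ln s + ln(ln(p ∨ n)) + ln M_σ] ≤ (1/2)·ln(p ∨ n)` implies the condition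
`(4s+4)·ln(M_σ·r_n) ≤ r_n + (6s+5)·ln 2` required for the tail bound of Theorem 1. -/
theorem statement17
    (σ : ℝ) (hσ : 0 < σ) (M : ℝ) (hM : 1 ≤ M)
    (s p n : ℕ) (hs : 1 ≤ s) (hpn : 3 ≤ max p n)
    (hsuff : 4 * (Real.log (s : ℝ) + Real.log (Real.log (max (p : ℝ) (n : ℝ))) + Real.log M)
        ≤ (1 / 2) * Real.log (max (p : ℝ) (n : ℝ))) :
    ((4 * s + 4 : ℕ) : ℝ) * Real.log (M * rN s p n)
      ≤ rN s p n + ((6 * s + 5 : ℕ) : ℝ) * Real.log 2 := by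
  set L : ℝ := Real.log (max (p : ℝ) (n : ℝ)) with hLdef
  have h3 : (3 : ℝ) ≤ max (p : ℝ) (n : ℝ) := by
    have := hpn
    rcases le_max_iff.mp hpn with h | h
    · exact le_max_of_le_left (by exact_mod_cast h)
    · exact le_max_of_le_right (by exact_mod_cast h)
  have hL1 : 1 < L := by
    have : 1 < Real.log 3 := by
      rw [Real.lt_log_iff_exp_lt (by norm_num)]
      calc Real.exp 1 < 2.7182818286 := Real.exp_one_lt_d9
        _ < 3 := by norm_num
    calc (1:ℝ) < Real.log 3 := this
      _ ≤ L := Real.log_le_log (by norm_num) h3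
  have hs1 : (1 : ℝ) ≤ (s : ℝ) := by exact_mod_cast hs
  have hr : rN s p n = (s : ℝ) * L := by
    rw [rN, max_eq_left]
    nlinarith
  have hsL : 0 < (s : ℝ) * L := by nlinarith
  have hlog : Real.log (M * ((s : ℝ) * L)) = Real.log M + (Real.log (s : ℝ) + Real.log L) := by
    rw [Real.log_mul (by linarith) (ne_of_gt hsL),
      Real.log_mul (by linarith) (by linarith)]
  have h2 : (0 : ℝ) ≤ Real.log 2 := Real.log_nonneg (by norm_num)
  rw [hr, hlog]
  push_cast
  nlinarith [mul_nonneg (by linarith : (0:ℝ) ≤ (s:ℝ)+1)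
      (by linarith : (0:ℝ) ≤ (1/2)*L - 4*(Real.log (s:ℝ) + Real.log L + Real.log M)),
    mul_nonneg (by linarith : (0:ℝ) ≤ (s:ℝ)-1) (by linarith : (0:ℝ) ≤ L)]

end
end
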